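/- arXiv:2412.15926 — 2 statements merged into one kernel-verified Lean document; each statement's English description precedes it below -/
import Mathlib

section
/- Let a < b, ε > 0, and u ∈ C²([a,b]) with 0 ≤ u ≤ 1/4. For all x, y ∈ [a,b], |(ε²/2)u'(x)² - F(u(x)) - ((ε²/2)u'(y)² - F(u(y)))| ≤ ε · ‖u'‖_{L²(a,b)} · (∫_a^b (ε u'' - (1/ε)F'(u))² dt)^{1/2}, where F(s) = s²/2 - 2s³. -/
open MeasureTheory intervalIntegral Set

lemma cs_aux {f g : ℝ → ℝ} (hf : Continuous f) (hg : Continuous g) (a b : ℝ) :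
    ∫ t in Set.Ioc a b, |f t| * |g t| ≤
      Real.sqrt (∫ t in Set.Ioc a b, (f t)^2) * Real.sqrt (∫ t in Set.Ioc a b, (g t)^2) := by
  have hfin : IsFiniteMeasure (volume.restrict (Set.Ioc a b)) :=
    ⟨by rw [Measure.restrict_apply_univ]; exact measure_Ioc_lt_top⟩
  have hpq : (2:ℝ).HolderConjugate 2 := by
    constructor <;> norm_num
  have hbf : ∃ C, ∀ t ∈ Set.Icc a b, |f t| ≤ C := by
    obtain ⟨C, hC⟩ := (isCompact_Icc (a := a) (b := b)).exists_bound_of_continuousOn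
      hf.continuousOn
    exact ⟨C, fun t ht => by simpa using hC t ht⟩
  have hbg : ∃ C, ∀ t ∈ Set.Icc a b, |g t| ≤ C := by
    obtain ⟨C, hC⟩ := (isCompact_Icc (a := a) (b := b)).exists_bound_of_continuousOn
      hg.continuousOn
    exact ⟨C, fun t ht => by simpa using hC t ht⟩
  obtain ⟨Cf, hCf⟩ := hbf
  obtain ⟨Cg, hCg⟩ := hbg
  have hmf : MemLp (fun t => |f t|) (ENNReal.ofReal 2) (volume.restrict (Set.Ioc a b)) := by
    refine MemLp.of_bound (hf.abs.aestronglyMeasurable) Cf ?_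
    refine (ae_restrict_iff' measurableSet_Ioc).2 (Filter.Eventually.of_forall fun t ht => ?_)
    simpa [abs_abs] using hCf t (Set.Ioc_subset_Icc_self ht)
  have hmg : MemLp (fun t => |g t|) (ENNReal.ofReal 2) (volume.restrict (Set.Ioc a b)) := by
    refine MemLp.of_bound (hg.abs.aestronglyMeasurable) Cg ?_
    refine (ae_restrict_iff' measurableSet_Ioc).2 (Filter.Eventually.of_forall fun t ht => ?_)
    simpa [abs_abs] using hCg t (Set.Ioc_subset_Icc_self ht)
  have h := MeasureTheory.integral_mul_le_Lp_mul_Lq_of_nonneg hpq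
    (Filter.Eventually.of_forall fun t => abs_nonneg (f t))
    (Filter.Eventually.of_forall fun t => abs_nonneg (g t)) hmf hmg
  have e1 : ∀ (h : ℝ → ℝ), (∫ t in Set.Ioc a b, |h t| ^ (2:ℝ)) = ∫ t in Set.Ioc a b, (h t)^2 := by
    intro h
    refine integral_congr_ae (Filter.Eventually.of_forall fun t => ?_)
    show |h t| ^ (2:ℝ) = (h t)^2
    rw [show ((2:ℝ) = ((2:ℕ):ℝ)) by norm_num, Real.rpow_natCast, sq_abs]
  rw [e1 f, e1 g] at h
  refine h.trans_eq ?_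
  rw [Real.sqrt_eq_rpow, Real.sqrt_eq_rpow]

theorem stmt10 (a b ε : ℝ) (hab : a < b) (hε : 0 < ε)
    (u F : ℝ → ℝ) (hu : ContDiff ℝ 2 u)
    (hrange : ∀ x ∈ Set.Icc a b, u x ∈ Set.Icc (0:ℝ) (1/4))
    (hF : ∀ s, F s = s^2/2 - 2*s^3) :
    ∀ x ∈ Set.Icc a b, ∀ y ∈ Set.Icc a b,
      |((ε^2/2) * (deriv u x)^2 - F (u x)) - ((ε^2/2) * (deriv u y)^2 - F (u y))| ≤
        ε * Real.sqrt (∫ t in a..b, (deriv u t)^2) *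
          Real.sqrt (∫ t in a..b, (ε * iteratedDeriv 2 u t - (1/ε) * deriv F (u t))^2) := by
  intro x hx y hy
  have hFeq : F = fun s => s^2/2 - 2*s^3 := funext hF
  have hF' : ∀ s : ℝ, HasDerivAt F (s - 6*s^2) s := by
    intro s
    rw [hFeq]
    have h1 : HasDerivAt (fun s : ℝ => s^2/2 - 2*s^3) ((2:ℕ)*s^(2-1)/2 - 2*((3:ℕ)*s^(3-1))) s :=
      ((hasDerivAt_pow 2 s).div_const 2).sub ((hasDerivAt_pow 3 s).const_mul 2)
    convert h1 using 1
    push_cast; ring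
  have hFd : ∀ s : ℝ, deriv F s = s - 6*s^2 := fun s => (hF' s).deriv
  have h2 : ContDiff ℝ (1+1) u := by
    rw [show ((1:WithTop ℕ∞)+1 = 2) by norm_num]
    exact hu
  obtain ⟨hud, -, hu1⟩ := contDiff_succ_iff_deriv.mp h2
  have cu' : Continuous (deriv u) := hu1.continuous
  have hud' : Differentiable ℝ (deriv u) := hu1.differentiable one_ne_zero
  have cu'' : Continuous (deriv (deriv u)) := hu1.continuous_deriv le_rfl
  have hi2 : iteratedDeriv 2 u = deriv (deriv u) := by
    rw [iteratedDeriv_succ, iteratedDeriv_one]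
  set g : ℝ → ℝ := fun t => ε * deriv (deriv u) t - (1/ε) * deriv F (u t) with hg
  have cg : Continuous g := by
    have : (fun t => deriv F (u t)) = fun t => u t - 6*(u t)^2 := funext fun t => hFd (u t)
    rw [hg]
    simp only [hFd]
    fun_prop
  have hξ : ∀ t : ℝ, HasDerivAt (fun t => (ε^2/2) * (deriv u t)^2 - F (u t))
      (ε * (deriv u t * g t)) t := by
    intro t
    have h1 : HasDerivAt (deriv u) (deriv (deriv u) t) t := (hud' t).hasDerivAt
    have hsq : HasDerivAt (fun t => (deriv u t)^2) (2 * deriv u t * deriv (deriv u) t) t := by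
      simpa using h1.fun_pow 2
    have hU : HasDerivAt u (deriv u t) t := (hud t).hasDerivAt
    have hFu : HasDerivAt (fun t => F (u t)) ((u t - 6*(u t)^2) * deriv u t) t :=
      (hF' (u t)).comp t hU
    have := (hsq.const_mul (ε^2/2)).fun_sub hFu
    refine this.congr_deriv ?_
    rw [hg]
    simp only [hFd]
    field_simp
  have hint : ∀ c d : ℝ, IntervalIntegrable (fun t => ε * (deriv u t * g t)) volume c d :=
    fun c d => (continuous_const.mul (cu'.mul cg)).intervalIntegrable c d
  have hftc : ((ε^2/2) * (deriv u x)^2 - F (u x)) - ((ε^2/2) * (deriv u y)^2 - F (u y)) =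
      ∫ t in y..x, ε * (deriv u t * g t) :=
    (intervalIntegral.integral_eq_sub_of_hasDerivAt (fun t _ => hξ t) (hint y x)).symm
  rw [hftc]
  have step1 : |∫ t in y..x, ε * (deriv u t * g t)| ≤
      ∫ t in Set.uIoc y x, |ε * (deriv u t * g t)| :=
by
    simpa only [Real.norm_eq_abs] using
      intervalIntegral.norm_integral_le_integral_norm_uIoc
        (f := fun t => ε * (deriv u t * g t)) (a := y) (b := x) (μ := volume)
  have hsub : Set.uIoc y x ⊆ Set.Ioc a b := by
    rw [Set.uIoc]
    intro t ht
    exact ⟨lt_of_le_of_lt (le_min hy.1 hx.1) ht.1, le_trans ht.2 (max_le hy.2 hx.2)⟩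
  have hintOn : IntegrableOn (fun t => |ε * (deriv u t * g t)|) (Set.Ioc a b) volume :=
    ((continuous_const.mul (cu'.mul cg)).abs.integrableOn_Ioc)
  have step2 : (∫ t in Set.uIoc y x, |ε * (deriv u t * g t)|) ≤
      ∫ t in Set.Ioc a b, |ε * (deriv u t * g t)| := by
    refine setIntegral_mono_set hintOn ?_ (HasSubset.Subset.eventuallyLE hsub)
    exact Filter.Eventually.of_forall fun t => abs_nonneg _
  have step3 : (∫ t in Set.Ioc a b, |ε * (deriv u t * g t)|) =
      ε * ∫ t in Set.Ioc a b, |deriv u t| * |g t| := by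
    rw [← MeasureTheory.integral_const_mul]
    refine integral_congr_ae (Filter.Eventually.of_forall fun t => ?_)
    show |ε * (deriv u t * g t)| = ε * (|deriv u t| * |g t|)
    rw [abs_mul, abs_mul, abs_of_pos hε]
  have step4 := cs_aux cu' cg a b
  have rhs1 : (∫ t in a..b, (deriv u t)^2) = ∫ t in Set.Ioc a b, (deriv u t)^2 :=
    intervalIntegral.integral_of_le hab.le
  have rhs2 : (∫ t in a..b, (ε * iteratedDeriv 2 u t - (1/ε) * deriv F (u t))^2) =
      ∫ t in Set.Ioc a b, (g t)^2 := by
    rw [intervalIntegral.integral_of_le hab.le, hi2]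
  rw [rhs1, rhs2]
  calc |∫ t in y..x, ε * (deriv u t * g t)|
      ≤ ∫ t in Set.Ioc a b, |ε * (deriv u t * g t)| := step1.trans step2
    _ = ε * ∫ t in Set.Ioc a b, |deriv u t| * |g t| := step3
    _ ≤ ε * (Real.sqrt (∫ t in Set.Ioc a b, (deriv u t)^2) *
        Real.sqrt (∫ t in Set.Ioc a b, (g t)^2)) := by
        exact mul_le_mul_of_nonneg_left step4 hε.le
    _ = _ := by ring
end

section
/- Let a < b and u ∈ C²([a,b]) with 0 ≤ u ≤ 1/4, and suppose the total phase-field energy E := ∫_a^b ((ε/2)u'² + (1/ε)F(u)) dx + (σ/(2ε)) ∫_a^b (εu'' - (1/ε)F'(u))² dx is finite with σ > 0. Then for every x ∈ [a,b], |ε²u'(x)² - 2F(u(x))| ≤ 2(ε/(b-a) + 2ε/√σ) · E. -/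
open MeasureTheory intervalIntegral Set

set_option maxHeartbeats 2000000 in
theorem stmt11 (a b ε σ : ℝ) (hab : a < b) (hε : 0 < ε) (hσ : 0 < σ)
    (u F : ℝ → ℝ) (hu : ContDiff ℝ 2 u)
    (hrange : ∀ x ∈ Set.Icc a b, u x ∈ Set.Icc (0:ℝ) (1/4))
    (hF : ∀ s, F s = s^2/2 - 2*s^3)
    (E : ℝ)
    (hE : E = (∫ x in a..b, ((ε/2) * (deriv u x)^2 + (1/ε) * F (u x))) +
      (σ/(2*ε)) * ∫ x in a..b, (ε * iteratedDeriv 2 u x - (1/ε) * deriv F (u x))^2) :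
    ∀ x ∈ Set.Icc a b,
      |ε^2 * (deriv u x)^2 - 2 * F (u x)| ≤
        2 * (ε/(b - a) + 2*ε/Real.sqrt σ) * E := by
  have hεne : (ε:ℝ) ≠ 0 := ne_of_gt hε
  set s := Real.sqrt σ with hs
  have hsq : 0 < s := Real.sqrt_pos.mpr hσ
  have hs2 : s^2 = σ := Real.sq_sqrt hσ.le
  have hFfun : F = fun s => s^2/2 - 2*s^3 := funext hF
  have hF' : ∀ s : ℝ, HasDerivAt F (s - 6*s^2) s := by
    intro s
    rw [hFfun]
    have h1 : HasDerivAt (fun x : ℝ => x^2/2 - 2*x^3) ((2:ℕ) * s^(2-1)/2 - 2*((3:ℕ)*s^(3-1))) s := ((hasDerivAt_pow 2 s).div_const 2).sub ((hasDerivAt_pow 3 s).const_mul 2)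
    convert h1 using 1
    push_cast
    ring
  have hdF : ∀ s, deriv F s = s - 6*s^2 := fun s => (hF' s).deriv
  -- smoothness of u
  have hu1 : ContDiff ℝ 1 (deriv u) := by
    have h2 : ContDiff ℝ ((1:ℕ∞)+1) u := by exact_mod_cast hu
    exact (contDiff_succ_iff_deriv.mp h2).2.2
  have hud : Differentiable ℝ u := hu.differentiable (by norm_num)
  have hud1 : Differentiable ℝ (deriv u) := hu1.differentiable one_ne_zero
  have hcu : Continuous u := hud.continuous
  have hcu' : Continuous (deriv u) := hud1.continuous
  have hcu'' : Continuous (deriv (deriv u)) := hu1.continuous_deriv le_rfl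
  have hiter : iteratedDeriv 2 u = deriv (deriv u) := by
    simp [iteratedDeriv_succ, iteratedDeriv_one]
  -- key functions
  set w : ℝ → ℝ := fun x => ε * deriv (deriv u) x - (1/ε) * (u x - 6*(u x)^2) with hw
  have hw_eq : ∀ x, ε * iteratedDeriv 2 u x - (1/ε) * deriv F (u x) = w x := by
    intro x; rw [hiter, hdF]
  set ξ : ℝ → ℝ := fun x => ε^2 * (deriv u x)^2 - 2 * F (u x) with hξ
  have hcw : Continuous w := by
    apply Continuous.sub (continuous_const.mul hcu'')
    exact continuous_const.mul (hcu.sub (continuous_const.mul (hcu.pow 2)))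
  have hξ' : ∀ x, HasDerivAt ξ (2*ε*(deriv u x)*(w x)) x := by
    intro x
    have h1 : HasDerivAt (fun y => (deriv u y)^2) (2*(deriv u x)*(deriv (deriv u) x)) x := by
      simpa [mul_comm] using ((hud1 x).hasDerivAt.fun_pow 2)
    have h2 : HasDerivAt (fun y => F (u y)) ((u x - 6*(u x)^2) * deriv u x) x :=
      (hF' (u x)).comp x (hud x).hasDerivAt
    have : HasDerivAt ξ (ε^2 * (2*deriv u x*deriv (deriv u) x) - 2*((u x - 6*u x^2)*deriv u x)) x := (h1.const_mul (ε^2)).fun_sub (h2.const_mul 2)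
    convert this using 1
    simp only [hw]
    field_simp
  have hcFu : Continuous (fun x => F (u x)) := by rw [hFfun]; fun_prop
  have hcξ : Continuous ξ :=
    (continuous_const.mul (hcu'.pow 2)).sub (continuous_const.mul hcFu)
  have hcξ' : Continuous (fun x => 2*ε*(deriv u x)*(w x)) := by fun_prop
  -- nonnegativity of F(u) on Icc
  have hFnn : ∀ y ∈ Icc a b, 0 ≤ F (u y) := by
    intro y hy
    obtain ⟨h0, h1⟩ := hrange y hy
    rw [hF]
    nlinarith
  -- integrals
  set A := ∫ x in a..b, (deriv u x)^2 with hA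
  set B := ∫ x in a..b, (w x)^2 with hB
  have hint1 : IntervalIntegrable (fun x => (deriv u x)^2) volume a b :=
    (hcu'.pow 2).intervalIntegrable a b
  have hint2 : IntervalIntegrable (fun x => (w x)^2) volume a b :=
    (hcw.pow 2).intervalIntegrable a b
  set E1 := ∫ x in a..b, ((ε/2) * (deriv u x)^2 + (1/ε) * F (u x)) with hE1
  have hintg : IntervalIntegrable (fun x => (ε/2) * (deriv u x)^2 + (1/ε) * F (u x)) volume a b :=
    ((continuous_const.mul (hcu'.pow 2)).add (continuous_const.mul hcFu)).intervalIntegrable a b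
  have hE' : E = E1 + (σ/(2*ε)) * B := by
    rw [hE, hB]
    congr 2
    apply intervalIntegral.integral_congr
    intro x _
    exact congrArg (fun z => z^2) (hw_eq x)
  have hE1nn : 0 ≤ E1 := by
    apply intervalIntegral.integral_nonneg hab.le
    intro y hy
    have := hFnn y hy
    positivity
  have hBnn : 0 ≤ B := by
    apply intervalIntegral.integral_nonneg hab.le
    intro y _
    positivity
  have hAnn : 0 ≤ A := by
    apply intervalIntegral.integral_nonneg hab.le
    intro y _
    positivity
  have hE1E : E1 ≤ E := by
    rw [hE']
    have : 0 ≤ (σ/(2*ε)) * B := by positivity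
    linarith
  have hEnn : 0 ≤ E := le_trans hE1nn hE1E
  have hA2 : ε * A ≤ 2 * E1 := by
    have h1 : (ε/2) * A ≤ E1 := by
      rw [hA, ← intervalIntegral.integral_const_mul]
      apply intervalIntegral.integral_mono_on hab.le
        (hint1.const_mul _) hintg
      intro y hy
      have := hFnn y hy
      have h2 : 0 ≤ (1/ε) * F (u y) := by positivity
      linarith
    linarith
  have hB2 : σ * B = 2 * ε * (E - E1) := by
    have : (σ/(2*ε)) * B = E - E1 := by linarith [hE']
    field_simp at this
    linarith
  -- FTC + AM-GM bound on variation of ξ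
  set t := ε / s with ht
  have htpos : 0 < t := div_pos hε hsq
  have hIabs : (∫ x in a..b, |2*ε*(deriv u x)*(w x)|) ≤ ε * (t * A + B / t) := by
    have heq : ε * (t * A + B / t) = ∫ x in a..b, ((ε*t) * (deriv u x)^2 + (ε/t) * (w x)^2) := by
      rw [intervalIntegral.integral_add (hint1.const_mul _) (hint2.const_mul _),
        intervalIntegral.integral_const_mul, intervalIntegral.integral_const_mul]
      rw [← hA, ← hB]
      field_simp
    rw [heq]
    apply intervalIntegral.integral_mono_on hab.le
      (hcξ'.abs.intervalIntegrable a b)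
      (by apply Continuous.intervalIntegrable; fun_prop)
    intro y _
    have h1 : |2*ε*(deriv u y)*(w y)| = 2*ε*(|deriv u y| * |w y|) := by
      rw [abs_mul, abs_mul, abs_mul]
      rw [abs_of_nonneg (by norm_num : (0:ℝ) ≤ 2), abs_of_nonneg hε.le]
      ring
    rw [h1]
    have h2 : (deriv u y)^2 = |deriv u y|^2 := (sq_abs _).symm
    have h3 : (w y)^2 = |w y|^2 := (sq_abs _).symm
    rw [h2, h3]
    have hinv : t * (|w y|^2 / t) = |w y|^2 := by field_simp
    have key : 2 * (|deriv u y| * |w y|) ≤ t * |deriv u y|^2 + |w y|^2 / t := by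
      nlinarith [sq_nonneg (t * |deriv u y| - |w y|), htpos, hinv,
        abs_nonneg (deriv u y), abs_nonneg (w y)]
    calc 2*ε*(|deriv u y| * |w y|) = ε * (2 * (|deriv u y| * |w y|)) := by ring
    _ ≤ ε * (t * |deriv u y|^2 + |w y|^2 / t) := mul_le_mul_of_nonneg_left key hε.le
    _ = ε*t * |deriv u y|^2 + ε/t * |w y|^2 := by field_simp
  have hvar : ∀ y ∈ Icc a b, ∀ x ∈ Icc a b, |ξ x - ξ y| ≤ ε * (t * A + B / t) := by
    have main : ∀ y x : ℝ, y ∈ Icc a b → x ∈ Icc a b → y ≤ x →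
        |ξ x - ξ y| ≤ ε * (t * A + B / t) := by
      intro y x hy hx hyx
      have hftc : ∫ z in y..x, 2*ε*(deriv u z)*(w z) = ξ x - ξ y := by
        apply intervalIntegral.integral_eq_sub_of_hasDerivAt
        · intro z _
          exact hξ' z
        · exact hcξ'.intervalIntegrable y x
      rw [← hftc]
      calc |∫ z in y..x, 2*ε*(deriv u z)*(w z)|
          ≤ ∫ z in y..x, |2*ε*(deriv u z)*(w z)| :=
            intervalIntegral.abs_integral_le_integral_abs hyx
        _ ≤ ∫ z in a..b, |2*ε*(deriv u z)*(w z)| := by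
            apply intervalIntegral.integral_mono_interval hy.1 hyx hx.2
            · exact Filter.Eventually.of_forall (fun z => abs_nonneg _)
            · exact hcξ'.abs.intervalIntegrable a b
        _ ≤ ε * (t * A + B / t) := hIabs
    intro y hy x hx
    rcases le_total y x with h | h
    · exact main y x hy hx h
    · rw [abs_sub_comm]
      exact main x y hx hy h
  -- minimum point
  obtain ⟨y₀, hy₀, hmin⟩ := isCompact_Icc.exists_isMinOn (nonempty_Icc.mpr hab.le)
    (hcξ.abs.continuousOn)
  have hminbd : |ξ y₀| * (b - a) ≤ 2 * ε * E1 := by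
    have h1 : (b - a) * |ξ y₀| ≤ ∫ y in a..b, |ξ y| := by
      have := intervalIntegral.integral_mono_on hab.le
        (_root_.intervalIntegrable_const (μ := MeasureTheory.volume) (c := |ξ y₀|))
        (hcξ.abs.intervalIntegrable a b) (fun y hy => hmin hy)
      simpa [intervalIntegral.integral_const, smul_eq_mul] using this
    have h2 : (∫ y in a..b, |ξ y|) ≤ ∫ y in a..b, (2*ε) * ((ε/2) * (deriv u y)^2 + (1/ε) * F (u y)) := by
      apply intervalIntegral.integral_mono_on hab.le
        (hcξ.abs.intervalIntegrable a b) (hintg.const_mul _)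
      intro y hy
      have hq := hFnn y hy
      have hp : (0:ℝ) ≤ ε^2 * (deriv u y)^2 := by positivity
      have : |ξ y| ≤ ε^2 * (deriv u y)^2 + 2 * F (u y) := by
        rw [hξ]
        calc |ε^2 * (deriv u y)^2 - 2 * F (u y)|
            ≤ |ε^2 * (deriv u y)^2| + |2 * F (u y)| := abs_sub _ _
          _ = ε^2 * (deriv u y)^2 + 2 * F (u y) := by
              rw [abs_of_nonneg hp, abs_of_nonneg (by linarith)]
      calc |ξ y| ≤ ε^2 * (deriv u y)^2 + 2 * F (u y) := this
        _ = (2*ε) * ((ε/2) * (deriv u y)^2 + (1/ε) * F (u y)) := by field_simp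
    rw [intervalIntegral.integral_const_mul, ← hE1] at h2
    linarith
  -- conclusion
  intro x hx
  have hxy := hvar y₀ hy₀ x hx
  clear_value A B E1 t s
  have htri : |ξ x| ≤ |ξ x - ξ y₀| + |ξ y₀| := by
    calc |ξ x| = |(ξ x - ξ y₀) + ξ y₀| := by ring_nf
      _ ≤ |ξ x - ξ y₀| + |ξ y₀| := abs_add_le _ _
  have key1 : ε * (t * A + B / t) ≤ 4 * ε * E / s := by
    have e1 : ε * (t * A + B / t) = (ε^2 * A + σ * B) / s := by
      rw [ht]
      field_simp
      rw [← hs2]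
      ring
    rw [e1]
    have hEE1 : 0 ≤ ε * (E - E1) := mul_nonneg hε.le (by linarith)
    have h1 : ε^2 * A ≤ 2 * ε * E := by
      have h := mul_le_mul_of_nonneg_left hA2 hε.le
      have h' : ε * (ε * A) = ε^2 * A := by ring
      have h'' : ε * (2 * E1) = 2 * ε * E1 := by ring
      linarith
    have h2 : σ * B ≤ 2 * ε * E := by
      have h3 : 0 ≤ ε * E1 := mul_nonneg hε.le hE1nn
      rw [hB2]; linarith
    have h4 : ε ^ 2 * A + σ * B ≤ 4 * ε * E := by linarith
    exact (div_le_div_iff_of_pos_right hsq).mpr h4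
  have key2 : |ξ y₀| ≤ 2 * ε * E / (b - a) := by
    rw [le_div_iff₀ (by linarith : (0:ℝ) < b - a)]
    have hEE1 : 0 ≤ ε * (E - E1) := mul_nonneg hε.le (by linarith)
    linarith
  have hrhs : 2 * (ε/(b - a) + 2*ε/s) * E = 4 * ε * E / s + 2 * ε * E / (b - a) := by
    field_simp
    ring
  show |ξ x| ≤ 2 * (ε/(b - a) + 2*ε/s) * E
  rw [hrhs]
  linarith
end
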